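/- Let T > 0, k ∈ H¹₁([0,T]) nonnegative and nonincreasing, H ∈ C¹(ℝ) convex, u ∈ L^∞([0,T]), and u₀ ∈ ℝ. Then for almost all t ∈ (0,T): H'(u(t))·(d/dt)(k∗[u−u₀])(t) ≥ (d/dt)(k∗[H(u)−H(u₀)])(t). -/

import Mathlib

open MeasureTheory Set
open Filter Metric Topology

lemma ae_hasDerivAt_primitive (g : ℝ → ℝ) (hg : Integrable g (volume : Measure ℝ)) :
    ∀ᵐ t ∂(volume : Measure ℝ),
      HasDerivAt (fun τ => ∫ x in (0:ℝ)..τ, g x) (g t) t := by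
  filter_upwards [(Besicovitch.vitaliFamily (volume : Measure ℝ)).ae_tendsto_average_norm_sub
    hg.locallyIntegrable] with t ht
  have ht' : Tendsto (fun r => ⨍ y in closedBall t r, ‖g y - g t‖) (𝓝[>] 0) (𝓝 0) :=
    ht.comp (Besicovitch.tendsto_filterAt volume t)
  rw [hasDerivAt_iff_isLittleO, Asymptotics.isLittleO_iff]
  intro c hc
  have hc2 : (0:ℝ) < c/2 := by linarith
  rw [Metric.tendsto_nhdsWithin_nhds] at ht'
  obtain ⟨δ, hδ, hδ'⟩ := ht' (c/2) hc2
  have : ∀ᶠ τ in 𝓝 t, |τ - t| < δ := by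
    have : Metric.ball t δ ∈ 𝓝 t := Metric.ball_mem_nhds t hδ
    filter_upwards [this] with τ hτ
    simpa [Real.dist_eq] using hτ
  filter_upwards [this] with τ hτ
  rcases eq_or_ne τ t with rfl | hne
  · simp
  · set r := |τ - t| with hr
    have hrpos : 0 < r := abs_pos.2 (sub_ne_zero.2 hne)
    have havg : ⨍ y in closedBall t r, ‖g y - g t‖ ≤ c/2 := by
      have h2 := hδ' (mem_Ioi.2 hrpos)
        (by rw [Real.dist_eq, sub_zero, abs_of_pos hrpos]; exact hτ)
      rw [Real.dist_eq, sub_zero] at h2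
      exact (le_abs_self _).trans h2.le
    have hii : ∀ a b : ℝ, IntervalIntegrable g volume a b := fun a b =>
      hg.intervalIntegrable
    have e1 : (∫ x in (0:ℝ)..τ, g x) - (∫ x in (0:ℝ)..t, g x) = ∫ x in t..τ, g x :=
      intervalIntegral.integral_interval_sub_left (hii 0 τ) (hii 0 t)
    have key : (∫ x in (0:ℝ)..τ, g x) - (∫ x in (0:ℝ)..t, g x) - (τ - t) • g t
        = ∫ x in t..τ, (g x - g t) := by
      rw [e1, intervalIntegral.integral_sub (hii t τ) (intervalIntegrable_const),
        intervalIntegral.integral_const]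
    have hsub : Set.uIoc t τ ⊆ closedBall t r := by
      intro x hx
      rw [mem_closedBall, Real.dist_eq]
      rcases hx with ⟨h1, h2⟩
      rw [abs_sub_le_iff]
      constructor
      · calc x - t ≤ max t τ - min t τ := by
              have := le_max_left t τ
              have := min_le_left t τ
              nlinarith [h2, min_le_left t τ]
        _ = |τ - t| := by rw [max_sub_min_eq_abs', abs_sub_comm]
      · calc t - x ≤ max t τ - min t τ := by nlinarith [le_max_left t τ, h1.le]
        _ = |τ - t| := by rw [max_sub_min_eq_abs', abs_sub_comm]
    have hint : IntegrableOn (fun x => ‖g x - g t‖) (closedBall t r) volume :=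
      (hg.integrableOn.sub (integrableOn_const measure_closedBall_lt_top.ne)).norm
    have step1 : ‖∫ x in t..τ, (g x - g t)‖ ≤ ∫ x in Set.uIoc t τ, ‖g x - g t‖ :=
      intervalIntegral.norm_integral_le_integral_norm_uIoc
    have step2 : ∫ x in Set.uIoc t τ, ‖g x - g t‖ ≤ ∫ x in closedBall t r, ‖g x - g t‖ := by
      apply setIntegral_mono_set hint
      · filter_upwards with x using norm_nonneg _
      · exact HasSubset.Subset.eventuallyLE hsub
    have hvol : (volume (closedBall t r)).toReal = 2 * r := by
      rw [Real.volume_closedBall, ENNReal.toReal_ofReal (by linarith)]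
    have step3 : ∫ x in closedBall t r, ‖g x - g t‖
        = (2 * r) * ⨍ y in closedBall t r, ‖g y - g t‖ := by
      rw [setAverage_eq, ← hvol, smul_eq_mul]
      rw [← mul_assoc, measureReal_def, mul_inv_cancel₀, one_mul]
      rw [hvol]; positivity
    have : ‖(∫ x in (0:ℝ)..τ, g x) - (∫ x in (0:ℝ)..t, g x) - (τ - t) • g t‖ ≤ c * r := by
      rw [key]
      calc ‖∫ x in t..τ, (g x - g t)‖ ≤ ∫ x in closedBall t r, ‖g x - g t‖ :=
            step1.trans step2
        _ = (2 * r) * ⨍ y in closedBall t r, ‖g y - g t‖ := step3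
        _ ≤ (2 * r) * (c / 2) := by
            apply mul_le_mul_of_nonneg_left havg (by linarith)
        _ = c * r := by ring
    simpa [Real.norm_eq_abs, hr] using this

lemma tangent_line_le {H : ℝ → ℝ} (hH : Differentiable ℝ H) (hc : ConvexOn ℝ Set.univ H)
    (x y : ℝ) : deriv H x * (y - x) ≤ H y - H x := by
  rcases lt_trichotomy x y with h | rfl | h
  · have hs := hc.deriv_le_slope (mem_univ x) (mem_univ y) h (hH x)
    rw [slope_def_field] at hs
    rw [le_div_iff₀ (by linarith)] at hs
    linarith
  · simp
  · have hs := hc.slope_le_deriv (mem_univ y) (mem_univ x) h (hH x)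
    rw [slope_def_field, div_le_iff₀ (by linarith)] at hs
    nlinarith

lemma deriv_nonpos_of_antitoneOn {k k' : ℝ → ℝ} {T : ℝ}
    (hk_deriv : ∀ t ∈ Set.Ioo (0:ℝ) T, HasDerivAt k (k' t) t)
    (hk_anti : AntitoneOn k (Set.Icc 0 T)) {r : ℝ} (hr : r ∈ Set.Ioo (0:ℝ) T) :
    k' r ≤ 0 := by
  have hslope : Filter.Tendsto (slope k r) (𝓝[>] r) (𝓝 (k' r)) :=
    ((hasDerivAt_iff_tendsto_slope).1 (hk_deriv r hr)).mono_left
      (nhdsWithin_mono r (fun x hx => ne_of_gt hx))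
  have hev : ∀ᶠ x in 𝓝[>] r, slope k r x ≤ 0 := by
    filter_upwards [self_mem_nhdsWithin,
      eventually_nhdsWithin_of_eventually_nhds (eventually_lt_nhds hr.2)] with x hx hx'
    rw [slope_def_field]
    apply div_nonpos_of_nonpos_of_nonneg
    · have : k x ≤ k r := hk_anti ⟨hr.1.le, hr.2.le⟩ ⟨(hr.1.trans hx).le, hx'.le⟩ hx.le
      linarith
    · linarith [hx.out]
  exact le_of_tendsto hslope hev

lemma conv_rep {T : ℝ} (hT : 0 < T) (k K' : ℝ → ℝ) (c : ℝ)
    (hK'm : Measurable K') (hK'int : Integrable K' (volume : Measure ℝ))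
    (hK'0 : ∀ r, r ∉ Set.Ioo (0:ℝ) T → K' r = 0)
    (hrep : ∀ s ∈ Set.Ioo (0:ℝ) T, k s = c + ∫ r in (0:ℝ)..s, K' r)
    {w : ℝ → ℝ} (hwm : Measurable w) {M : ℝ} (hwb : ∀ x, |w x| ≤ M) :
    IntegrableOn (fun s => c * w s + ∫ σ in (0:ℝ)..s, K' (s - σ) * w σ) (Set.Ioc 0 T) volume
    ∧ ∀ τ ∈ Set.Ioo (0:ℝ) T,
      (∫ σ in (0:ℝ)..τ, k (τ - σ) * w σ)
        = ∫ s in (0:ℝ)..τ, (c * w s + ∫ σ in (0:ℝ)..s, K' (s - σ) * w σ) := by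
  have hM0 : 0 ≤ M := (abs_nonneg _).trans (hwb 0)
  set B : ℝ := ∫ x, ‖K' x‖ with hB
  -- measurability of the product integrand
  have hpm : Measurable (fun p : ℝ × ℝ => K' (p.2 - p.1) * w p.1) :=
    (hK'm.comp (measurable_snd.sub measurable_fst)).mul (hwm.comp measurable_fst)
  -- product integrability on squares
  have hprod : ∀ b : ℝ, Integrable (fun p : ℝ × ℝ => K' (p.2 - p.1) * w p.1)
      ((volume.restrict (Set.Ioc 0 b)).prod (volume.restrict (Set.Ioc 0 b))) := by
    intro b
    have hmeas : AEStronglyMeasurable (fun p : ℝ × ℝ => K' (p.2 - p.1) * w p.1)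
        ((volume.restrict (Set.Ioc 0 b)).prod (volume.restrict (Set.Ioc 0 b))) :=
      hpm.aestronglyMeasurable
    rw [integrable_prod_iff hmeas]
    constructor
    · exact ae_of_all _ fun σ => ((hK'int.comp_sub_right σ).mul_const (w σ)).integrableOn
    · have hbnd : ∀ σ : ℝ, (∫ s in Set.Ioc 0 b, ‖K' (s - σ) * w σ‖) ≤ M * B := by
        intro σ
        have hi1 : IntegrableOn (fun s => ‖K' (s - σ)‖ * M) (Set.Ioc 0 b) volume :=
          ((hK'int.comp_sub_right σ).norm.mul_const M).integrableOn
        have hi0 : IntegrableOn (fun s => ‖K' (s - σ) * w σ‖) (Set.Ioc 0 b) volume :=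
          ((hK'int.comp_sub_right σ).mul_const (w σ)).norm.integrableOn
        calc (∫ s in Set.Ioc 0 b, ‖K' (s - σ) * w σ‖)
            ≤ ∫ s in Set.Ioc 0 b, ‖K' (s - σ)‖ * M := by
              refine setIntegral_mono hi0 hi1 fun s => ?_
              rw [norm_mul]
              exact mul_le_mul_of_nonneg_left (by simpa [Real.norm_eq_abs] using hwb σ)
                (norm_nonneg _)
          _ = (∫ s in Set.Ioc 0 b, ‖K' (s - σ)‖) * M := integral_mul_const M _
          _ ≤ (∫ s, ‖K' (s - σ)‖) * M := by
              refine mul_le_mul_of_nonneg_right ?_ hM0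
              exact setIntegral_le_integral (hK'int.comp_sub_right σ).norm
                (ae_of_all _ fun x => norm_nonneg _)
          _ = B * M := by rw [integral_sub_right_eq_self (fun x => ‖K' x‖) σ]
          _ = M * B := mul_comm _ _
      refine Integrable.mono' (g := fun _ => M * B)
        (integrableOn_const measure_Ioc_lt_top.ne)
        hmeas.norm.integral_prod_right' (ae_of_all _ fun σ => ?_)
      rw [Real.norm_eq_abs, abs_of_nonneg (integral_nonneg fun s => norm_nonneg _)]
      exact hbnd σ
  -- the inner integral over a bigger interval reduces to `0..s`
  have hinner : ∀ s b : ℝ, 0 ≤ s → s ≤ b →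
      (∫ σ in Set.Ioc 0 b, K' (s - σ) * w σ) = ∫ σ in (0:ℝ)..s, K' (s - σ) * w σ := by
    intro s b h0 hsb
    have hz : ∀ σ ∈ Set.Ioc s b, K' (s - σ) * w σ = 0 := by
      intro σ hσ
      rw [hK'0 (s - σ) (fun h => absurd h.1 (by linarith [hσ.1])), zero_mul]
    have hint1 : Integrable (fun σ => K' (s - σ) * w σ) volume := by
      have h2 : Integrable (fun σ => w σ * K' (s - σ)) volume :=
        (hK'int.comp_sub_left s).bdd_mul hwm.aestronglyMeasurable
          (ae_of_all _ fun x => by simpa [Real.norm_eq_abs] using hwb x)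
      exact h2.congr (ae_of_all _ fun σ => mul_comm _ _)
    rw [intervalIntegral.integral_of_le h0, ← Set.Ioc_union_Ioc_eq_Ioc h0 hsb,
      setIntegral_union (Set.Ioc_disjoint_Ioc_of_le le_rfl) measurableSet_Ioc
        hint1.integrableOn hint1.integrableOn]
    rw [setIntegral_congr_fun measurableSet_Ioc hz, integral_zero, add_zero]
  -- integrability of the inner-integral function on `Ioc 0 T`
  have hg2 : IntegrableOn (fun s => ∫ σ in (0:ℝ)..s, K' (s - σ) * w σ) (Set.Ioc 0 T) volume := by
    have h := (hprod T).integral_prod_right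
    refine h.congr ?_
    refine (ae_restrict_iff' measurableSet_Ioc).2 (ae_of_all _ fun s hs => ?_)
    exact hinner s T hs.1.le hs.2
  have hg1 : ∀ b : ℝ, IntegrableOn (fun s => c * w s) (Set.Ioc 0 b) volume := by
    intro b
    refine Integrable.mono' (g := fun _ => |c| * M)
      (integrableOn_const measure_Ioc_lt_top.ne)
      ((hwm.const_mul c).aestronglyMeasurable.restrict) (ae_of_all _ fun x => ?_)
    rw [Real.norm_eq_abs, abs_mul]
    exact mul_le_mul_of_nonneg_left (hwb x) (abs_nonneg c)
  refine ⟨(hg1 T).add hg2, ?_⟩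
  intro τ hτ
  have h0τ : (0:ℝ) ≤ τ := hτ.1.le
  have hnorm_bnd : ∀ σ : ℝ, ‖∫ s in Set.Ioc 0 τ, K' (s - σ)‖ ≤ B := by
    intro σ
    calc ‖∫ s in Set.Ioc 0 τ, K' (s - σ)‖ ≤ ∫ s in Set.Ioc 0 τ, ‖K' (s - σ)‖ :=
          norm_integral_le_integral_norm _
      _ ≤ ∫ s, ‖K' (s - σ)‖ := setIntegral_le_integral (hK'int.comp_sub_right σ).norm
          (ae_of_all _ fun x => norm_nonneg _)
      _ = B := integral_sub_right_eq_self (fun x => ‖K' x‖) σ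
  have hB0 : 0 ≤ B := integral_nonneg fun x => norm_nonneg _
  have hJm : AEStronglyMeasurable (fun σ => (∫ s in Set.Ioc 0 τ, K' (s - σ)) * w σ)
      (volume.restrict (Set.Ioc 0 τ)) := by
    have hFm : AEStronglyMeasurable (fun p : ℝ × ℝ => K' (p.2 - p.1))
        ((volume.restrict (Set.Ioc 0 τ)).prod (volume.restrict (Set.Ioc 0 τ))) :=
      (hK'm.comp (measurable_snd.sub measurable_fst)).aestronglyMeasurable
    exact hFm.integral_prod_right'.mul hwm.aestronglyMeasurable.restrict
  have hJ : IntegrableOn (fun σ => (∫ s in Set.Ioc 0 τ, K' (s - σ)) * w σ)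
      (Set.Ioc 0 τ) volume := by
    refine Integrable.mono' (g := fun _ => B * M)
      (integrableOn_const measure_Ioc_lt_top.ne) hJm (ae_of_all _ fun σ => ?_)
    rw [norm_mul]
    exact mul_le_mul (hnorm_bnd σ) (by simpa [Real.norm_eq_abs] using hwb σ)
      (norm_nonneg _) hB0
  have hg2τ : IntegrableOn (fun s => ∫ σ in (0:ℝ)..s, K' (s - σ) * w σ)
      (Set.Ioc 0 τ) volume := by
    refine ((hprod τ).integral_prod_right).congr ?_
    exact (ae_restrict_iff' measurableSet_Ioc).2
      (ae_of_all _ fun s hs => hinner s τ hs.1.le hs.2)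
  have hIσ : ∀ σ ∈ Set.Ioo (0:ℝ) τ, (∫ r in (0:ℝ)..(τ - σ), K' r)
      = ∫ s in Set.Ioc 0 τ, K' (s - σ) := by
    intro σ hσ
    have e1 : (∫ s in σ..τ, K' (s - σ)) = ∫ r in (0:ℝ)..(τ - σ), K' r := by
      rw [intervalIntegral.integral_comp_sub_right (fun r => K' r) σ, sub_self]
    have hz : ∀ s ∈ Set.Ioc 0 σ, K' (s - σ) = 0 := fun s hs =>
      hK'0 _ fun h => absurd h.1 (by linarith [hs.2])
    have hintK : Integrable (fun s => K' (s - σ)) volume := hK'int.comp_sub_right σ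
    rw [← e1, intervalIntegral.integral_of_le hσ.2.le,
      ← Set.Ioc_union_Ioc_eq_Ioc hσ.1.le hσ.2.le,
      setIntegral_union (Set.Ioc_disjoint_Ioc_of_le le_rfl) measurableSet_Ioc
        hintK.integrableOn hintK.integrableOn,
      setIntegral_congr_fun measurableSet_Ioc hz, integral_zero, zero_add]
  rw [intervalIntegral.integral_of_le h0τ, intervalIntegral.integral_of_le h0τ]
  calc ∫ σ in Set.Ioc 0 τ, k (τ - σ) * w σ
      = ∫ σ in Set.Ioo 0 τ, k (τ - σ) * w σ := integral_Ioc_eq_integral_Ioo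
    _ = ∫ σ in Set.Ioo 0 τ, (c * w σ + (∫ s in Set.Ioc 0 τ, K' (s - σ)) * w σ) := by
        refine setIntegral_congr_fun measurableSet_Ioo fun σ hσ => ?_
        have hmem : τ - σ ∈ Set.Ioo (0:ℝ) T :=
          ⟨by linarith [hσ.2], by linarith [hσ.1, hτ.2]⟩
        rw [hrep (τ - σ) hmem, hIσ σ hσ, add_mul]
    _ = ∫ σ in Set.Ioc 0 τ, (c * w σ + (∫ s in Set.Ioc 0 τ, K' (s - σ)) * w σ) :=
        integral_Ioc_eq_integral_Ioo.symm
    _ = (∫ σ in Set.Ioc 0 τ, c * w σ)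
        + ∫ σ in Set.Ioc 0 τ, (∫ s in Set.Ioc 0 τ, K' (s - σ)) * w σ :=
        integral_add (hg1 τ) hJ
    _ = (∫ σ in Set.Ioc 0 τ, c * w σ)
        + ∫ σ in Set.Ioc 0 τ, ∫ s in Set.Ioc 0 τ, K' (s - σ) * w σ := by
        congr 1
        refine setIntegral_congr_fun measurableSet_Ioc fun σ _ => ?_
        exact (integral_mul_const (w σ) _).symm
    _ = (∫ σ in Set.Ioc 0 τ, c * w σ)
        + ∫ s in Set.Ioc 0 τ, ∫ σ in Set.Ioc 0 τ, K' (s - σ) * w σ := by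
        rw [integral_integral_swap (hprod τ)]
    _ = (∫ s in Set.Ioc 0 τ, c * w s)
        + ∫ s in Set.Ioc 0 τ, (∫ σ in (0:ℝ)..s, K' (s - σ) * w σ) := by
        congr 1
        refine setIntegral_congr_fun measurableSet_Ioc fun s hs => ?_
        exact hinner s τ hs.1.le hs.2
    _ = ∫ s in Set.Ioc 0 τ, (c * w s + ∫ σ in (0:ℝ)..s, K' (s - σ) * w σ) :=
        (integral_add (hg1 τ) hg2τ).symm

theorem convex_fundamental_inequality
    (T : ℝ) (hT : 0 < T)
    (k k' : ℝ → ℝ)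
    (hk_int : IntervalIntegrable k volume 0 T)
    (hk'_int : IntervalIntegrable k' volume 0 T)
    (hk_deriv : ∀ t ∈ Set.Ioo (0:ℝ) T, HasDerivAt k (k' t) t)
    (hk_nonneg : ∀ t ∈ Set.Icc (0:ℝ) T, 0 ≤ k t)
    (hk_anti : AntitoneOn k (Set.Icc 0 T))
    (H : ℝ → ℝ) (hH : ContDiff ℝ 1 H) (hHconv : ConvexOn ℝ Set.univ H)
    (u : ℝ → ℝ) (hu : MemLp u ⊤ (volume.restrict (Set.Ioc 0 T)))
    (u₀ : ℝ) :
    ∀ᵐ t ∂(volume.restrict (Set.Ioo (0:ℝ) T)),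
      ∃ D₁ D₂ : ℝ,
        HasDerivAt (fun τ => ∫ σ in (0:ℝ)..τ, k (τ - σ) * (u σ - u₀)) D₁ t ∧
        HasDerivAt (fun τ => ∫ σ in (0:ℝ)..τ, k (τ - σ) * (H (u σ) - H u₀)) D₂ t ∧
        D₂ ≤ deriv H (u t) * D₁ := by
  have hHdiff : Differentiable ℝ H := hH.differentiable one_ne_zero
  set μT := volume.restrict (Set.Ioc (0:ℝ) T) with hμT
  -- essential bound
  set C : ℝ := (eLpNormEssSup u μT).toReal with hC
  have hC0 : 0 ≤ C := ENNReal.toReal_nonneg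
  have hET : eLpNormEssSup u μT < ⊤ := by
    have := hu.2; rwa [eLpNorm_exponent_top] at this
  have hCae : ∀ᵐ x ∂μT, |u x| ≤ C := by
    filter_upwards [ae_le_eLpNormEssSup (f := u) (μ := μT)] with x hx
    have := ENNReal.toReal_mono hET.ne hx
    simpa [hC] using this
  -- measurable bounded representative
  obtain ⟨v₀, hv₀sm, hv₀e⟩ := hu.1
  set v : ℝ → ℝ := fun x => max (-C) (min (v₀ x) C) with hv
  have hvm : Measurable v := measurable_const.max (hv₀sm.measurable.min measurable_const)
  have hvb : ∀ x, |v x| ≤ C := by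
    intro x
    rw [abs_le]
    constructor
    · exact neg_le_neg le_rfl |>.trans (le_max_left _ _)
    · exact max_le (by linarith) (min_le_right _ _)
  have hveq : ∀ᵐ x ∂μT, u x = v x := by
    filter_upwards [hv₀e, hCae] with x hx hb
    rw [hv]; simp only
    rw [← hx, min_eq_left (abs_le.1 hb).2, max_eq_right (abs_le.1 hb).1]
  -- the modified kernel derivative
  set K' : ℝ → ℝ := (Set.Ioo (0:ℝ) T).indicator (deriv k) with hK'
  have hK'm : Measurable K' := (measurable_deriv k).indicator measurableSet_Ioo
  have hK'0 : ∀ r, r ∉ Set.Ioo (0:ℝ) T → K' r = 0 := fun r hr =>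
    Set.indicator_of_notMem hr _
  have hK'eq : ∀ r ∈ Set.Ioo (0:ℝ) T, K' r = k' r := fun r hr => by
    rw [hK', Set.indicator_of_mem hr, (hk_deriv r hr).deriv]
  have hK'int : Integrable K' (volume : Measure ℝ) := by
    rw [hK', integrable_indicator_iff measurableSet_Ioo]
    exact (hk'_int.1.mono_set Set.Ioo_subset_Ioc_self).congr_fun
      (fun r hr => ((hk_deriv r hr).deriv).symm) measurableSet_Ioo
  have hK'nonpos : ∀ r, K' r ≤ 0 := by
    intro r
    by_cases hr : r ∈ Set.Ioo (0:ℝ) T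
    · rw [hK', Set.indicator_of_mem hr, (hk_deriv r hr).deriv]
      exact deriv_nonpos_of_antitoneOn hk_deriv hk_anti hr
    · rw [hK'0 r hr]
  -- FTC representation of k
  have hs₀ : T/2 ∈ Set.Ioo (0:ℝ) T := ⟨by linarith, by linarith⟩
  set c : ℝ := k (T/2) - ∫ r in (0:ℝ)..(T/2), K' r with hc
  have hrep : ∀ s ∈ Set.Ioo (0:ℝ) T, k s = c + ∫ r in (0:ℝ)..s, K' r := by
    intro s hs
    have hsub : Set.uIcc (T/2) s ⊆ Set.Ioo (0:ℝ) T := by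
      intro x hx
      constructor
      · exact lt_of_lt_of_le (lt_inf_iff.2 ⟨hs₀.1, hs.1⟩) hx.1
      · exact lt_of_le_of_lt hx.2 (sup_lt_iff.2 ⟨hs₀.2, hs.2⟩)
    have hsub' : Set.uIcc (T/2) s ⊆ Set.uIcc 0 T := by
      rw [Set.uIcc_of_le hT.le]
      exact hsub.trans Set.Ioo_subset_Icc_self
    have hftc : (∫ r in (T/2)..s, k' r) = k s - k (T/2) :=
      intervalIntegral.integral_eq_sub_of_hasDerivAt
        (fun x hx => hk_deriv x (hsub hx)) (hk'_int.mono_set hsub')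
    have hcongr : (∫ r in (T/2)..s, K' r) = ∫ r in (T/2)..s, k' r :=
      intervalIntegral.integral_congr fun x hx => hK'eq x (hsub hx)
    have hsplit : (∫ r in (0:ℝ)..s, K' r) - ∫ r in (0:ℝ)..(T/2), K' r
        = ∫ r in (T/2)..s, K' r :=
      intervalIntegral.integral_interval_sub_left hK'int.intervalIntegrable
        hK'int.intervalIntegrable
    rw [hc]
    linarith [hftc, hcongr, hsplit]
  have hc0 : 0 ≤ c := by
    have h1 : (∫ r in (0:ℝ)..(T/2), K' r) ≤ 0 := by
      rw [intervalIntegral.integral_of_le hs₀.1.le]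
      exact integral_nonpos fun x => hK'nonpos x
    have h2 : 0 ≤ k (T/2) := hk_nonneg _ ⟨hs₀.1.le, hs₀.2.le⟩
    rw [hc]; linarith
  -- the two bounded measurable data functions
  set w₁ : ℝ → ℝ := fun σ => v σ - u₀ with hw₁
  set w₂ : ℝ → ℝ := fun σ => H (v σ) - H u₀ with hw₂
  have hw₁m : Measurable w₁ := hvm.sub measurable_const
  have hw₂m : Measurable w₂ := (hH.continuous.measurable.comp hvm).sub measurable_const
  have hw₁b : ∀ x, |w₁ x| ≤ C + |u₀| := fun x =>
    (abs_sub _ _).trans (add_le_add (hvb x) le_rfl)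
  obtain ⟨D, hD⟩ := (isCompact_Icc (a := -C) (b := C)).exists_bound_of_continuousOn
    hH.continuous.continuousOn
  have hw₂b : ∀ x, |w₂ x| ≤ D + |H u₀| := by
    intro x
    refine (abs_sub _ _).trans (add_le_add ?_ le_rfl)
    have := hD (v x) (abs_le.1 (hvb x) |> fun h => ⟨h.1, h.2⟩)
    simpa [Real.norm_eq_abs] using this
  obtain ⟨hg₁int, hg₁rep⟩ := conv_rep hT k K' c hK'm hK'int hK'0 hrep hw₁m hw₁b
  obtain ⟨hg₂int, hg₂rep⟩ := conv_rep hT k K' c hK'm hK'int hK'0 hrep hw₂m hw₂b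
  set g₁ : ℝ → ℝ := fun s => c * w₁ s + ∫ σ in (0:ℝ)..s, K' (s - σ) * w₁ σ with hg₁
  set g₂ : ℝ → ℝ := fun s => c * w₂ s + ∫ σ in (0:ℝ)..s, K' (s - σ) * w₂ σ with hg₂
  set G₁ : ℝ → ℝ := (Set.Ioc (0:ℝ) T).indicator g₁ with hG₁
  set G₂ : ℝ → ℝ := (Set.Ioc (0:ℝ) T).indicator g₂ with hG₂
  have hG₁int : Integrable G₁ (volume : Measure ℝ) :=
    (integrable_indicator_iff measurableSet_Ioc).2 hg₁int
  have hG₂int : Integrable G₂ (volume : Measure ℝ) :=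
    (integrable_indicator_iff measurableSet_Ioc).2 hg₂int
  have hae1 : ∀ᵐ t ∂(volume.restrict (Set.Ioo (0:ℝ) T)),
      HasDerivAt (fun τ => ∫ x in (0:ℝ)..τ, G₁ x) (G₁ t) t :=
    ae_restrict_of_ae (ae_hasDerivAt_primitive G₁ hG₁int)
  have hae2 : ∀ᵐ t ∂(volume.restrict (Set.Ioo (0:ℝ) T)),
      HasDerivAt (fun τ => ∫ x in (0:ℝ)..τ, G₂ x) (G₂ t) t :=
    ae_restrict_of_ae (ae_hasDerivAt_primitive G₂ hG₂int)
  have haeu : ∀ᵐ t ∂(volume.restrict (Set.Ioo (0:ℝ) T)), u t = v t :=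
    ae_restrict_of_ae_restrict_of_subset Set.Ioo_subset_Ioc_self hveq
  have hmem : ∀ᵐ t ∂(volume.restrict (Set.Ioo (0:ℝ) T)), t ∈ Set.Ioo (0:ℝ) T :=
    ae_restrict_mem measurableSet_Ioo
  filter_upwards [hae1, hae2, haeu, hmem] with t h1 h2 hut ht
  have huvae : ∀ᵐ x ∂(volume : Measure ℝ), x ∈ Set.Ioc (0:ℝ) T → u x = v x :=
    (ae_restrict_iff' measurableSet_Ioc).1 hveq
  have hEq1 : ∀ τ ∈ Set.Ioo (0:ℝ) T,
      (∫ σ in (0:ℝ)..τ, k (τ - σ) * (u σ - u₀)) = ∫ x in (0:ℝ)..τ, G₁ x := by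
    intro τ hτ
    have e0 : (∫ σ in (0:ℝ)..τ, k (τ - σ) * (u σ - u₀))
        = ∫ σ in (0:ℝ)..τ, k (τ - σ) * w₁ σ := by
      refine intervalIntegral.integral_congr_ae ?_
      filter_upwards [huvae] with x hx hmem'
      rw [Set.uIoc_of_le hτ.1.le] at hmem'
      rw [hx ⟨hmem'.1, hmem'.2.trans hτ.2.le⟩]
    have e2 : (∫ s in (0:ℝ)..τ, g₁ s) = ∫ x in (0:ℝ)..τ, G₁ x := by
      rw [intervalIntegral.integral_of_le hτ.1.le, intervalIntegral.integral_of_le hτ.1.le]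
      refine setIntegral_congr_fun measurableSet_Ioc fun x hx => ?_
      have hxT : x ∈ Set.Ioc (0:ℝ) T := ⟨hx.1, hx.2.trans hτ.2.le⟩
      rw [hG₁, Set.indicator_of_mem hxT]
    rw [e0, hg₁rep τ hτ, e2]
  have hEq2 : ∀ τ ∈ Set.Ioo (0:ℝ) T,
      (∫ σ in (0:ℝ)..τ, k (τ - σ) * (H (u σ) - H u₀)) = ∫ x in (0:ℝ)..τ, G₂ x := by
    intro τ hτ
    have e0 : (∫ σ in (0:ℝ)..τ, k (τ - σ) * (H (u σ) - H u₀))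
        = ∫ σ in (0:ℝ)..τ, k (τ - σ) * w₂ σ := by
      refine intervalIntegral.integral_congr_ae ?_
      filter_upwards [huvae] with x hx hmem'
      rw [Set.uIoc_of_le hτ.1.le] at hmem'
      rw [hx ⟨hmem'.1, hmem'.2.trans hτ.2.le⟩]
    have e2 : (∫ s in (0:ℝ)..τ, g₂ s) = ∫ x in (0:ℝ)..τ, G₂ x := by
      rw [intervalIntegral.integral_of_le hτ.1.le, intervalIntegral.integral_of_le hτ.1.le]
      refine setIntegral_congr_fun measurableSet_Ioc fun x hx => ?_
      have hxT : x ∈ Set.Ioc (0:ℝ) T := ⟨hx.1, hx.2.trans hτ.2.le⟩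
      rw [hG₂, Set.indicator_of_mem hxT]
    rw [e0, hg₂rep τ hτ, e2]
  have hd1 : HasDerivAt (fun τ => ∫ σ in (0:ℝ)..τ, k (τ - σ) * (u σ - u₀)) (G₁ t) t := by
    refine h1.congr_of_eventuallyEq ?_
    filter_upwards [isOpen_Ioo.mem_nhds ht] with τ hτ using hEq1 τ hτ
  have hd2 : HasDerivAt (fun τ => ∫ σ in (0:ℝ)..τ, k (τ - σ) * (H (u σ) - H u₀)) (G₂ t) t := by
    refine h2.congr_of_eventuallyEq ?_
    filter_upwards [isOpen_Ioo.mem_nhds ht] with τ hτ using hEq2 τ hτ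
  refine ⟨G₁ t, G₂ t, hd1, hd2, ?_⟩
  have htmem : t ∈ Set.Ioc (0:ℝ) T := ⟨ht.1, ht.2.le⟩
  rw [hG₁, hG₂, Set.indicator_of_mem htmem, Set.indicator_of_mem htmem, hut]
  set L := deriv H (v t) with hL
  set φ : ℝ → ℝ := fun σ => L * w₁ σ - w₂ σ with hφ
  have hφm : Measurable φ := (hw₁m.const_mul L).sub hw₂m
  have hφb : ∀ x, |φ x| ≤ |L| * (C + |u₀|) + (D + |H u₀|) := by
    intro x
    refine (abs_sub _ _).trans (add_le_add ?_ (hw₂b x))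
    rw [abs_mul]
    exact mul_le_mul_of_nonneg_left (hw₁b x) (abs_nonneg L)
  have hφt : 0 ≤ φ t := by
    have h := tangent_line_le hHdiff hHconv (v t) u₀
    simp only [hφ, hw₁, hw₂, hL]
    linarith
  have hφle : ∀ σ, φ σ ≤ φ t := by
    intro σ
    have h := tangent_line_le hHdiff hHconv (v t) (v σ)
    simp only [hφ, hw₁, hw₂, hL]
    linarith
  have h0t : (0:ℝ) ≤ t := ht.1.le
  have hIK : IntervalIntegrable (fun σ => K' (t - σ)) volume 0 t :=
    (hK'int.comp_sub_left t).intervalIntegrable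
  have hIint : ∀ (w : ℝ → ℝ), Measurable w → ∀ (Mw : ℝ), (∀ x, |w x| ≤ Mw) →
      IntervalIntegrable (fun σ => K' (t - σ) * w σ) volume 0 t := by
    intro w hwm Mw hwb
    have h2 : Integrable (fun σ => w σ * K' (t - σ)) volume :=
      (hK'int.comp_sub_left t).bdd_mul hwm.aestronglyMeasurable
        (ae_of_all _ fun x => by simpa [Real.norm_eq_abs] using hwb x)
    exact (h2.congr (ae_of_all _ fun σ => mul_comm _ _)).intervalIntegrable
  have hI1 := hIint w₁ hw₁m _ hw₁b
  have hI2 := hIint w₂ hw₂m _ hw₂b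
  have hIφ := hIint φ hφm _ hφb
  have hIφt : IntervalIntegrable (fun σ => K' (t - σ) * (φ σ - φ t)) volume 0 t := by
    refine hIint (fun σ => φ σ - φ t) (hφm.sub measurable_const)
      ((|L| * (C + |u₀|) + (D + |H u₀|)) + |φ t|) fun x => ?_
    exact (abs_sub _ _).trans (add_le_add (hφb x) le_rfl)
  have id1 : (∫ σ in (0:ℝ)..t, K' (t - σ) * φ σ)
      = L * (∫ σ in (0:ℝ)..t, K' (t - σ) * w₁ σ) - ∫ σ in (0:ℝ)..t, K' (t - σ) * w₂ σ := by
    rw [← intervalIntegral.integral_const_mul, ← intervalIntegral.integral_sub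
      (hI1.const_mul L) hI2]
    refine intervalIntegral.integral_congr fun σ _ => ?_
    simp only [hφ]; ring
  have e3 : (∫ σ in (0:ℝ)..t, K' (t - σ)) = k t - c := by
    have hrt := hrep t ht
    have e4 : (∫ σ in (0:ℝ)..t, K' (t - σ)) = ∫ r in (0:ℝ)..t, K' r := by
      have := intervalIntegral.integral_comp_sub_left (a := (0:ℝ)) (b := t)
        (fun r => K' r) t
      simpa using this
    linarith
  have id2 : (∫ σ in (0:ℝ)..t, K' (t - σ) * φ σ)
      = (∫ σ in (0:ℝ)..t, K' (t - σ) * (φ σ - φ t)) + (k t - c) * φ t := by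
    calc (∫ σ in (0:ℝ)..t, K' (t - σ) * φ σ)
        = ∫ σ in (0:ℝ)..t, (K' (t - σ) * (φ σ - φ t) + K' (t - σ) * φ t) := by
          refine intervalIntegral.integral_congr fun σ _ => ?_; ring
      _ = (∫ σ in (0:ℝ)..t, K' (t - σ) * (φ σ - φ t))
          + ∫ σ in (0:ℝ)..t, K' (t - σ) * φ t :=
          intervalIntegral.integral_add hIφt (hIK.mul_const (φ t))
      _ = (∫ σ in (0:ℝ)..t, K' (t - σ) * (φ σ - φ t))
          + (∫ σ in (0:ℝ)..t, K' (t - σ)) * φ t := by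
          rw [intervalIntegral.integral_mul_const]
      _ = (∫ σ in (0:ℝ)..t, K' (t - σ) * (φ σ - φ t)) + (k t - c) * φ t := by rw [e3]
  have hpos : 0 ≤ ∫ σ in (0:ℝ)..t, K' (t - σ) * (φ σ - φ t) :=
    intervalIntegral.integral_nonneg h0t fun σ _ =>
      by nlinarith [hK'nonpos (t - σ), hφle σ]
  have hkt : 0 ≤ k t * φ t := mul_nonneg (hk_nonneg t ⟨h0t, ht.2.le⟩) hφt
  have hφtdef : φ t = L * w₁ t - w₂ t := by simp only [hφ]
  have hcφ : c * φ t = c * (L * w₁ t) - c * w₂ t := by rw [hφtdef]; ring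
  have hcφ0 : 0 ≤ c * φ t := mul_nonneg hc0 hφt
  show g₂ t ≤ L * g₁ t
  simp only [hg₁, hg₂]
  nlinarith [id1, id2, hpos, hkt, hcφ, hcφ0]
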